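/- Convergence of regularized solutions with vanishing noise: let β : (0,∞) → (0,∞) satisfy β(δ) → 0 and δ²/β(δ) → 0 as δ → 0. Let δ_k → 0, ‖ū − u_k‖ ≤ δ_k, β_k = β(δ_k), and let a_k minimize ‖F(a) − u_k‖² + β_k f(a) over D. Assume there exists a solution a* ∈ D of F(a) = ū. Then (a_k) has a weakly convergent subsequence, and every weak limit a† of a subsequence satisfies F(a†) = ū and f(a†) ≤ f(a) for all a ∈ D with F(a) = ū. -/

import Mathlib

open Filter

/-- Weak convergence of a sequence in a normed space. -/
def WeakConv {E : Type*} [NormedAddCommGroup E] [NormedSpace ℝ E]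
    (s : ℕ → E) (a : E) : Prop :=
  ∀ φ : E →L[ℝ] ℝ, Tendsto (fun k => φ (s k)) atTop (nhds (φ a))

/-- Sequential weak compactness of bounded sets: the Eberlein–Šmulian
characterization of reflexivity for a Banach space. -/
def Reflexive' (E : Type*) [NormedAddCommGroup E] [NormedSpace ℝ E] : Prop :=
  ∀ s : ℕ → E, (∃ M : ℝ, ∀ k, ‖s k‖ ≤ M) →
    ∃ σ : ℕ → ℕ, StrictMono σ ∧ ∃ a : E, WeakConv (s ∘ σ) a

/-- convergence of regularized solutions with vanishing noise.
With `β(δ) → 0`, `δ²/β(δ) → 0` as `δ → 0`, `δ_k → 0`, `‖ū − u_k‖ ≤ δ_k`, and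
`a_k` minimizing `‖F a − u_k‖² + β(δ_k) f a` over `D`, if the equation
`F a = ū` has a solution in `D`, then `(a_k)` has a weakly convergent
subsequence, and every weak subsequential limit `a†` satisfies `F a† = ū` and
minimizes `f` among all solutions in `D`. -/
theorem tikhonov_convergence
    {X Y : Type*} [NormedAddCommGroup X] [NormedSpace ℝ X] [CompleteSpace X]
    [NormedAddCommGroup Y] [NormedSpace ℝ Y] [CompleteSpace Y]
    (hreflX : Reflexive' X) (hreflY : Reflexive' Y)
    (D : Set X) (hDconv : Convex ℝ D) (hDclosed : IsClosed D)
    (F : X → Y)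
    (hFwc : ∀ (s : ℕ → X) (a : X) (v : Y), (∀ k, s k ∈ D) →
      WeakConv s a → WeakConv (fun k => F (s k)) v → a ∈ D ∧ F a = v)
    (hFwcont : ∀ (s : ℕ → X) (a : X), (∀ k, s k ∈ D) → a ∈ D →
      WeakConv s a → WeakConv (fun k => F (s k)) (F a))
    (f : X → ℝ) (hfnonneg : ∀ a, 0 ≤ f a) (hfconv : ConvexOn ℝ Set.univ f)
    (hfwlsc : ∀ (s : ℕ → X) (a : X), WeakConv s a →
      f a ≤ liminf (fun k => f (s k)) atTop)
    (hfcoercive : ∀ s : ℕ → X, Tendsto (fun k => ‖s k‖) atTop atTop →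
      Tendsto (fun k => f (s k)) atTop atTop)
    (β : ℝ → ℝ) (hβpos : ∀ δ > 0, 0 < β δ)
    (hβ0 : Tendsto β (nhdsWithin 0 (Set.Ioi 0)) (nhds 0))
    (hδβ : Tendsto (fun δ => δ ^ 2 / β δ) (nhdsWithin 0 (Set.Ioi 0)) (nhds 0))
    (ubar : Y) (astar : X) (hastar : astar ∈ D) (hsol : F astar = ubar)
    (δk : ℕ → ℝ) (hδpos : ∀ k, 0 < δk k) (hδ0 : Tendsto δk atTop (nhds 0))
    (uk : ℕ → Y) (hnoise : ∀ k, ‖ubar - uk k‖ ≤ δk k)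
    (ak : ℕ → X) (hmin : ∀ k, ak k ∈ D ∧ ∀ a ∈ D,
      ‖F (ak k) - uk k‖ ^ 2 + β (δk k) * f (ak k) ≤
        ‖F a - uk k‖ ^ 2 + β (δk k) * f a) :
    (∃ σ : ℕ → ℕ, StrictMono σ ∧ ∃ a : X, WeakConv (ak ∘ σ) a) ∧
    (∀ (σ : ℕ → ℕ) (adag : X), StrictMono σ → WeakConv (ak ∘ σ) adag →
      adag ∈ D ∧ F adag = ubar ∧ ∀ a ∈ D, F a = ubar → f adag ≤ f a) := by

  have hδT : Tendsto δk atTop (nhdsWithin 0 (Set.Ioi 0)) :=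
    tendsto_nhdsWithin_of_tendsto_nhds_of_eventually_within _ hδ0
      (Filter.Eventually.of_forall hδpos)
  set βk : ℕ → ℝ := fun k => β (δk k) with hβkdef
  set qk : ℕ → ℝ := fun k => δk k ^ 2 / βk k with hqkdef
  have hβk0 : Tendsto βk atTop (nhds 0) := hβ0.comp hδT
  have hqk0 : Tendsto qk atTop (nhds 0) := hδβ.comp hδT
  have hβkpos : ∀ k, 0 < βk k := fun k => hβpos _ (hδpos k)
  have hqknonneg : ∀ k, 0 ≤ qk k := fun k =>
    div_nonneg (sq_nonneg _) (hβkpos k).le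
  -- key estimate against any solution
  have key : ∀ a ∈ D, F a = ubar → ∀ k,
      ‖F (ak k) - uk k‖ ^ 2 + βk k * f (ak k) ≤ δk k ^ 2 + βk k * f a := by
    intro a ha hFa k
    have h1 := (hmin k).2 a ha
    have h2 : ‖F a - uk k‖ ≤ δk k := by rw [hFa]; exact hnoise k
    have h3 : ‖F a - uk k‖ ^ 2 ≤ δk k ^ 2 :=
      pow_le_pow_left₀ (norm_nonneg _) h2 2
    calc ‖F (ak k) - uk k‖ ^ 2 + βk k * f (ak k)
        ≤ ‖F a - uk k‖ ^ 2 + βk k * f a := h1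
      _ ≤ δk k ^ 2 + βk k * f a := by linarith
  have hfbound : ∀ a ∈ D, F a = ubar → ∀ k, f (ak k) ≤ qk k + f a := by
    intro a ha hFa k
    have h1 := key a ha hFa k
    have h2 := sq_nonneg ‖F (ak k) - uk k‖
    have hb := hβkpos k
    have h3 : qk k * βk k = δk k ^ 2 := div_mul_cancel₀ _ hb.ne'
    nlinarith
  have hres : ∀ k, ‖F (ak k) - uk k‖ ^ 2 ≤ δk k ^ 2 + βk k * f astar := by
    intro k
    have h1 := key astar hastar hsol k
    have h2 : 0 ≤ βk k * f (ak k) := mul_nonneg (hβkpos k).le (hfnonneg _)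
    linarith
  -- f (ak k) is bounded
  obtain ⟨Cq, hCq⟩ : ∃ Cq, ∀ k, qk k ≤ Cq := by
    obtain ⟨Cq, hCq⟩ := hqk0.bddAbove_range
    exact ⟨Cq, fun k => hCq ⟨k, rfl⟩⟩
  have hfB : ∀ k, f (ak k) ≤ Cq + f astar := fun k => by
    have := hfbound astar hastar hsol k; have := hCq k; linarith
  -- norms bounded
  have hbdd : ∃ M, ∀ k, ‖ak k‖ ≤ M := by
    by_contra h
    push_neg at h
    have hfreq : ∀ n : ℕ, ∃ᶠ k in atTop, (n : ℝ) ≤ ‖ak k‖ := by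
      intro n
      rw [Filter.frequently_atTop]
      intro N
      obtain ⟨k, hk⟩ := h (((Finset.range (N + 1)).sup' ⟨0, by simp⟩
        fun i => ‖ak i‖) + n)
      have hsup0 : (0:ℝ) ≤ (Finset.range (N + 1)).sup' ⟨0, by simp⟩
          fun i => ‖ak i‖ :=
        le_trans (norm_nonneg (ak 0)) (Finset.le_sup' (fun i => ‖ak i‖) (Finset.mem_range.mpr (Nat.succ_pos N)))
      refine ⟨k, ?_, by nlinarith [Nat.cast_nonneg (α := ℝ) n]⟩
      by_contra hkN
      push_neg at hkN
      have : ‖ak k‖ ≤ (Finset.range (N + 1)).sup' ⟨0, by simp⟩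
          fun i => ‖ak i‖ :=
        Finset.le_sup' (fun i => ‖ak i‖) (Finset.mem_range.mpr (by omega))
      nlinarith [Nat.cast_nonneg (α := ℝ) n]
    obtain ⟨σ, hσ, hσn⟩ := Filter.extraction_forall_of_frequently hfreq
    have htop : Tendsto (fun n => ‖(ak ∘ σ) n‖) atTop atTop :=
      tendsto_atTop_mono hσn tendsto_natCast_atTop_atTop
    have := hfcoercive (ak ∘ σ) htop
    obtain ⟨k, hk⟩ := (this.eventually_ge_atTop (Cq + f astar + 1)).exists
    have := hfB (σ k)
    simp only [Function.comp] at hk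
    linarith
  -- strong convergence F (ak k) → ubar
  have hFconv : Tendsto (fun k => F (ak k)) atTop (nhds ubar) := by
    rw [tendsto_iff_norm_sub_tendsto_zero]
    have hub : ∀ k, ‖F (ak k) - ubar‖ ≤
        Real.sqrt (δk k ^ 2 + βk k * f astar) + δk k := by
      intro k
      have h1 : ‖F (ak k) - ubar‖ ≤ ‖F (ak k) - uk k‖ + ‖ubar - uk k‖ := by
        have := norm_sub_le_norm_sub_add_norm_sub (F (ak k)) (uk k) ubar
        calc ‖F (ak k) - ubar‖ ≤ ‖F (ak k) - uk k‖ + ‖uk k - ubar‖ := this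
          _ = ‖F (ak k) - uk k‖ + ‖ubar - uk k‖ := by rw [norm_sub_rev (uk k) ubar]
      have h2 : ‖F (ak k) - uk k‖ ≤ Real.sqrt (δk k ^ 2 + βk k * f astar) := by
        rw [show ‖F (ak k) - uk k‖ = Real.sqrt (‖F (ak k) - uk k‖ ^ 2) from
          (Real.sqrt_sq (norm_nonneg _)).symm]
        exact Real.sqrt_le_sqrt (hres k)
      have := hnoise k
      linarith
    have hRHS : Tendsto (fun k => Real.sqrt (δk k ^ 2 + βk k * f astar) + δk k)
        atTop (nhds 0) := by
      have h1 : Tendsto (fun k => δk k ^ 2 + βk k * f astar) atTop (nhds 0) := by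
        have h := ((hδ0.pow 2).add (hβk0.mul_const (f astar)))
        norm_num at h
        exact h
      have h2 : Tendsto (fun k => Real.sqrt (δk k ^ 2 + βk k * f astar))
          atTop (nhds 0) := by
        have h := (Real.continuous_sqrt.tendsto 0).comp h1
        simpa [Function.comp_def] using h
      simpa using h2.add hδ0
    exact squeeze_zero (fun k => norm_nonneg _) hub hRHS
  obtain ⟨M, hM⟩ := hbdd
  refine ⟨hreflX ak ⟨M, hM⟩, ?_⟩
  intro σ adag hσ hw
  have hmem : ∀ k, (ak ∘ σ) k ∈ D := fun k => (hmin (σ k)).1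
  have hFw : WeakConv (fun k => F ((ak ∘ σ) k)) ubar := by
    intro φ
    exact (φ.continuous.tendsto _).comp (hFconv.comp hσ.tendsto_atTop)
  obtain ⟨hmemD, hFeq⟩ := hFwc (ak ∘ σ) adag ubar hmem hw hFw
  refine ⟨hmemD, hFeq, ?_⟩
  intro a ha hFa
  have h1 := hfwlsc (ak ∘ σ) adag hw
  have hg : Tendsto (fun k => qk (σ k) + f a) atTop (nhds (0 + f a)) :=
    (hqk0.comp hσ.tendsto_atTop).add tendsto_const_nhds
  have hub : ∀ k, f ((ak ∘ σ) k) ≤ qk (σ k) + f a := fun k =>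
    hfbound a ha hFa (σ k)
  have h2 : liminf (fun k => f ((ak ∘ σ) k)) atTop ≤ f a := by
    have hbu : IsBoundedUnder (· ≥ ·) atTop (fun k => f ((ak ∘ σ) k)) :=
      Filter.isBoundedUnder_of ⟨0, fun k => hfnonneg _⟩
    have hbv : IsCoboundedUnder (· ≥ ·) atTop (fun k => qk (σ k) + f a) :=
      Filter.isCoboundedUnder_ge_of_le atTop (x := Cq + f a)
        fun k => by have := hCq (σ k); linarith
    have h3 := Filter.liminf_le_liminf (Filter.Eventually.of_forall hub) hbu hbv
    rw [hg.liminf_eq] at h3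
    linarith
  linarith
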